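/- Work in ℝ⁴ with the Minkowski form η = diag(−1,1,1,1). Let F be antisymmetric, set v = e₀, and define the stress tensor T^{μν} = 2 F^{μα} F^ν{}_α − (1/2) η^{μν} F_{αβ} F^{αβ} (indices raised/lowered with η). Then v_μ T^{μν} v_ν = |E|² + |B|², and for every τ ∈ ℝ⁴ with η(τ,τ) < 0 and η(τ, v) < 0, one has v_μ T^{μν} τ_ν ≥ ((−η(τ,v)) − |τ⃗|) (|E|² + |B|²) = (1/2)((−η(τ,v)) − |τ⃗|) |F|_m², where E_i = F_{i0}, B_i = (1/2)ε_{ijk}F_{jk}, τ⃗ = (τ¹,τ²,τ³), and |F|_m² = Σ(F_{μν})². -/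
import Mathlib
open Matrix

private lemma key13 (a b c d e f t1 t2 t3 r : ℝ) (hr : 0 ≤ r)
    (hr2 : r ^ 2 = t1 ^ 2 + t2 ^ 2 + t3 ^ 2) :
    2*t1*(b*f-c*e) - 2*t2*(a*f-c*d) + 2*t3*(a*e-b*d)
      ≤ r * (a^2+b^2+c^2+d^2+e^2+f^2) := by
  set P1 := 2*(b*f-c*e)
  set P2 := 2*(c*d-a*f)
  set P3 := 2*(a*e-b*d)
  set S := a^2+b^2+c^2+d^2+e^2+f^2 with hSdef
  have hS : 0 ≤ S := by positivity
  have cauchy : (P1*t1+P2*t2+P3*t3)^2 ≤ (P1^2+P2^2+P3^2)*(t1^2+t2^2+t3^2) := by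
    nlinarith [sq_nonneg (P1*t2-P2*t1), sq_nonneg (P1*t3-P3*t1), sq_nonneg (P2*t3-P3*t2)]
  have hP : P1^2+P2^2+P3^2 ≤ S^2 := by
    simp only [P1, P2, P3, hSdef]
    nlinarith [sq_nonneg (a*d+b*e+c*f), sq_nonneg (a^2+b^2+c^2-(d^2+e^2+f^2))]
  have h1 : (P1*t1+P2*t2+P3*t3)^2 ≤ (r*S)^2 := by
    have := mul_le_mul_of_nonneg_right hP (sq_nonneg r)
    nlinarith [cauchy, hr2, sq_nonneg r]
  have h2 : P1*t1+P2*t2+P3*t3 ≤ r*S := by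
    calc P1*t1+P2*t2+P3*t3 ≤ |P1*t1+P2*t2+P3*t3| := le_abs_self _
      _ = Real.sqrt ((P1*t1+P2*t2+P3*t3)^2) := (Real.sqrt_sq_eq_abs _).symm
      _ ≤ Real.sqrt ((r*S)^2) := Real.sqrt_le_sqrt h1
      _ = r*S := Real.sqrt_sq (by positivity)
  calc 2*t1*(b*f-c*e) - 2*t2*(a*f-c*d) + 2*t3*(a*e-b*d)
      = P1*t1+P2*t2+P3*t3 := by simp only [P1, P2, P3]; ring
    _ ≤ r*S := h2

theorem stmt_13 (F : Matrix (Fin 4) (Fin 4) ℝ) (hF : Fᵀ = -F)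
    (s : Fin 4 → ℝ) (hs : ∀ μ, s μ = if μ = 0 then -1 else 1)
    (v : Fin 4 → ℝ) (hv : v = ![1, 0, 0, 0])
    (E B : Fin 3 → ℝ)
    (hE : E = ![F 1 0, F 2 0, F 3 0])
    (hB : B = ![F 2 3, F 3 1, F 1 2])
    (T : Matrix (Fin 4) (Fin 4) ℝ)
    (hT : ∀ μ ν, T μ ν =
      2 * (∑ α, (s μ * s α * F μ α) * (s ν * F ν α))
        - 1 / 2 * (if μ = ν then s μ else 0) * (∑ α, ∑ β, s α * s β * F α β * F α β))
    (τ : Fin 4 → ℝ)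
    (hτtime : (∑ μ, s μ * τ μ * τ μ) < 0)
    (hτv : (∑ μ, s μ * τ μ * v μ) < 0) :
    (∑ μ, ∑ ν, (s μ * v μ) * T μ ν * (s ν * v ν))
        = (E 0 ^ 2 + E 1 ^ 2 + E 2 ^ 2) + (B 0 ^ 2 + B 1 ^ 2 + B 2 ^ 2) ∧
    ((-(∑ μ, s μ * τ μ * v μ)) - Real.sqrt (τ 1 ^ 2 + τ 2 ^ 2 + τ 3 ^ 2)) *
        ((E 0 ^ 2 + E 1 ^ 2 + E 2 ^ 2) + (B 0 ^ 2 + B 1 ^ 2 + B 2 ^ 2))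
      ≤ ∑ μ, ∑ ν, (s μ * v μ) * T μ ν * (s ν * τ ν) ∧
    ((-(∑ μ, s μ * τ μ * v μ)) - Real.sqrt (τ 1 ^ 2 + τ 2 ^ 2 + τ 3 ^ 2)) *
        ((E 0 ^ 2 + E 1 ^ 2 + E 2 ^ 2) + (B 0 ^ 2 + B 1 ^ 2 + B 2 ^ 2))
      = 1 / 2 * ((-(∑ μ, s μ * τ μ * v μ)) - Real.sqrt (τ 1 ^ 2 + τ 2 ^ 2 + τ 3 ^ 2)) *
        (∑ μ, ∑ ν, F μ ν * F μ ν) := by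
  have hanti : ∀ μ ν, F μ ν = -F ν μ := fun μ ν => by
    have := congrFun (congrFun hF ν) μ
    simpa [Matrix.transpose_apply] using this
  have hdiag : ∀ μ, F μ μ = 0 := fun μ => by have := hanti μ μ; linarith
  have h01 : F 0 1 = -F 1 0 := hanti 0 1
  have h02 : F 0 2 = -F 2 0 := hanti 0 2
  have h03 : F 0 3 = -F 3 0 := hanti 0 3
  have h12 : F 2 1 = -F 1 2 := hanti 2 1
  have h13 : F 1 3 = -F 3 1 := hanti 1 3
  have h23 : F 3 2 = -F 2 3 := hanti 3 2
  subst hv hE hB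
  simp only [Fin.sum_univ_four, hT, hs, hdiag, h01, h02, h03, h12, h13, h23,
    Matrix.cons_val_zero, Matrix.cons_val_one, Matrix.head_cons, Matrix.cons_val_two,
    Matrix.tail_cons, Matrix.cons_val_three] at *
  have e1 : ((1:Fin 4) = 0) = False := by decide
  have e2 : ((2:Fin 4) = 0) = False := by decide
  have e3 : ((3:Fin 4) = 0) = False := by decide
  have e02 : ((0:Fin 4) = 2) = False := by decide
  have e03 : ((0:Fin 4) = 3) = False := by decide
  simp only [e1, e2, e3, e02, e03, if_false] at *
  norm_num at *
  refine ⟨by ring, ?_, by ring⟩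
  set r := Real.sqrt (τ 1 ^ 2 + τ 2 ^ 2 + τ 3 ^ 2) with hrdef
  have hr : 0 ≤ r := Real.sqrt_nonneg _
  have hr2 : r ^ 2 = τ 1 ^ 2 + τ 2 ^ 2 + τ 3 ^ 2 := Real.sq_sqrt (by positivity)
  nlinarith [key13 (F 1 0) (F 2 0) (F 3 0) (F 2 3) (F 3 1) (F 1 2) (τ 1) (τ 2) (τ 3) r hr hr2]
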